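/- For integers s ≥ 5, h, k satisfying 2h(s-1) + k(s+1) = 2s, the inequality -8 ≤ (2h-1)²(2s-2) + 2(2k-1)(2h-1)(s+1) ≤ 0 has no solutions. -/

import Mathlib

/-- Arithmetic core of the "no walls" lemma: for integers `s ≥ 5`, `h`, `k` with
`2h(s-1) + k(s+1) = 2s`, the inequality
`-8 ≤ (2h-1)²(2s-2) + 2(2k-1)(2h-1)(s+1) ≤ 0` has no solutions. -/
theorem no_walls_arith (s h k : ℤ) (hs : 5 ≤ s)
    (hslope : 2 * h * (s - 1) + k * (s + 1) = 2 * s) :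
    ¬ (-8 ≤ (2*h - 1)^2 * (2*s - 2) + 2 * (2*k - 1) * (2*h - 1) * (s + 1) ∧
        (2*h - 1)^2 * (2*s - 2) + 2 * (2*k - 1) * (2*h - 1) * (s + 1) ≤ 0) := by
  rintro ⟨h1, h2⟩
  have key : (2*h - 1)^2 * (2*s - 2) + 2 * (2*k - 1) * (2*h - 1) * (s + 1)
      = -2*(s-1)*(2*h-1)^2 + 2*(s+1)*(2*h-1) := by
    linear_combination (4*(2*h-1)) * hslope
  rcases le_or_gt h 0 with hh | hh
  · -- u = 2h-1 ≤ -1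
    nlinarith [sq_nonneg (2*h-1), mul_nonneg (by linarith : (0:ℤ) ≤ s-1) (by nlinarith : (0:ℤ) ≤ (2*h-1)^2 - 1)]
  · rcases eq_or_lt_of_le (by omega : (0:ℤ) + 1 ≤ h) with rfl | hh1
    · omega
    rcases eq_or_lt_of_le (by linarith : (1:ℤ) ≤ h) with h1' | h2'
    · rw [← h1'] at key; omega
    · -- h ≥ 2, u ≥ 3
      have hu : 3 ≤ 2*h - 1 := by linarith
      nlinarith [mul_le_mul_of_nonneg_left (by nlinarith : (s+1) - (s-1)*(2*h-1) ≤ 4 - 2*s) (by linarith : (0:ℤ) ≤ 2*h-1)]
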